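/- Let G be a finite group with a nonempty finite symmetric generating set S. Then the function R′ associated to (G, S) is at most logarithmic: there exists a constant C > 0 such that R′(n) ≤ C·log(n) for all n ≥ 2. -/

import Mathlib

/-- The cogrowth function of a group `G` with respect to a generating set `S`:
`cogrowth G S n` is the number of words of length `n` in the letters of `S`
whose product in `G` is the identity. -/
noncomputable def cogrowth (G : Type*) [Group G] (S : Set G) (n : ℕ) : ℕ :=
  Nat.card {w : Fin n → S // (List.ofFn fun i => ((w i : G))).prod = 1}

/-- `D = limsup dₙ^{1/n}`, the asymptotic cogrowth rate. -/
noncomputable def cogrowthRate (G : Type*) [Group G] (S : Set G) : ℝ :=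
  Filter.limsup (fun n : ℕ => (cogrowth G S n : ℝ) ^ ((n : ℝ)⁻¹)) Filter.atTop

/-- `R′(n) = min { k : d_{2k+2}/d_{2k} > D² − 1/n }`. -/
noncomputable def Rprime (G : Type*) [Group G] (S : Set G) (n : ℕ) : ℕ :=
  sInf {k : ℕ |
    (cogrowth G S (2 * k + 2) : ℝ) / (cogrowth G S (2 * k) : ℝ) >
      (cogrowthRate G S) ^ 2 - 1 / (n : ℝ)}

/-- `f ≾ g`: there are constants `a, b > 0` with `f(n) ≤ a·g(⌈bn⌉)` for all
sufficiently large `n`. -/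
def AsympLE (f g : ℕ → ℝ) : Prop :=
  ∃ a b : ℝ, 0 < a ∧ 0 < b ∧ ∀ᶠ n : ℕ in Filter.atTop, f n ≤ a * g ⌈b * (n : ℝ)⌉₊

/-- `f ∼ g`: `f ≾ g` and `g ≾ f`. -/
def AsympEquiv (f g : ℕ → ℝ) : Prop :=
  AsympLE f g ∧ AsympLE g f

/-- The reduced-cogrowth function of a group presented as a quotient
`φ : FreeGroup X →* G`: the number of elements of the free group of reduced
word length `n` that map to the identity of `G`. -/
noncomputable def redCogrowth {X : Type*} [DecidableEq X] {G : Type*} [Group G]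
    (φ : FreeGroup X →* G) (n : ℕ) : ℕ :=
  Nat.card {w : FreeGroup X // (FreeGroup.toWord w).length = n ∧ φ w = 1}

/-- `C = limsup cₙ^{1/n}`, the asymptotic reduced-cogrowth rate. -/
noncomputable def redCogrowthRate {X : Type*} [DecidableEq X] {G : Type*} [Group G]
    (φ : FreeGroup X →* G) : ℝ :=
  Filter.limsup (fun n : ℕ => (redCogrowth φ n : ℝ) ^ ((n : ℝ)⁻¹)) Filter.atTop

/-- `R(n) = min { k : c_{2k+2}/c_{2k} > C² − 1/n }`. -/
noncomputable def RR {X : Type*} [DecidableEq X] {G : Type*} [Group G]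
    (φ : FreeGroup X →* G) (n : ℕ) : ℕ :=
  sInf {k : ℕ |
    (redCogrowth φ (2 * k + 2) : ℝ) / (redCogrowth φ (2 * k) : ℝ) >
      (redCogrowthRate φ) ^ 2 - 1 / (n : ℝ)}

section CogrowthAux

open Matrix Finset Filter
set_option maxHeartbeats 1000000
set_option linter.unusedSectionVars false

open Finset Filter
set_option maxHeartbeats 1000000

lemma analysis_aux {ι : Type*} [Fintype ι] (d : ℕ → ℕ) (c μ : ι → ℝ) (hc : ∀ i, 0 ≤ c i)
    (hd : ∀ n, (d n : ℝ) = ∑ i, c i * μ i ^ n) (hd0 : d 0 = 1) (hd2 : 0 < d 2)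
    (D : ℝ) (hD : D = Filter.limsup (fun n : ℕ => (d n : ℝ) ^ ((n : ℝ)⁻¹)) Filter.atTop) :
    ∃ C : ℝ, 0 < C ∧ ∀ n : ℕ, 2 ≤ n →
      ((sInf {k : ℕ | (d (2 * k + 2) : ℝ) / (d (2 * k) : ℝ) > D ^ 2 - 1 / (n : ℝ)} : ℕ) : ℝ)
        ≤ C * Real.log n := by
  classical
  set ν : ι → ℝ := fun i => μ i ^ 2 with hνdef
  have hν0 : ∀ i, 0 ≤ ν i := fun i => sq_nonneg _
  set J : Finset ι := Finset.univ.filter (fun i => c i ≠ 0) with hJdef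
  have hcJ : ∀ i ∈ J, 0 < c i := by
    intro i hi
    rw [hJdef, Finset.mem_filter] at hi
    exact lt_of_le_of_ne (hc i) (Ne.symm hi.2)
  have hsum1 : ∑ i, c i = 1 := by
    have := hd 0
    simp only [pow_zero, mul_one, hd0, Nat.cast_one] at this
    exact this.symm
  -- even formula
  have heven : ∀ k, (d (2 * k) : ℝ) = ∑ i ∈ J, c i * ν i ^ k := by
    intro k
    rw [hd (2 * k)]
    have hsub : ∑ i ∈ J, c i * μ i ^ (2 * k) = ∑ i, c i * μ i ^ (2 * k) := by
      refine Finset.sum_subset (Finset.subset_univ J) fun i _ hi => ?_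
      have : c i = 0 := by
        by_contra hne
        exact hi (by rw [hJdef]; simp [hne])
      rw [this, zero_mul]
    rw [← hsub]
    refine Finset.sum_congr rfl fun i _ => ?_
    rw [hνdef]
    rw [← pow_mul]
  -- positive term at n = 2
  obtain ⟨i2, hi2J, hi2pos⟩ : ∃ i ∈ J, 0 < c i * ν i := by
    have h2 : (0 : ℝ) < ∑ i ∈ J, c i * ν i ^ 1 := by
      rw [← heven 1]
      exact_mod_cast hd2
    by_contra hcon
    push_neg at hcon
    have : ∑ i ∈ J, c i * ν i ^ 1 ≤ 0 := by
      refine Finset.sum_nonpos fun i hi => ?_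
      rw [pow_one]
      exact hcon i hi
    linarith
  have hJne : J.Nonempty := ⟨i2, hi2J⟩
  set M : ℝ := J.sup' hJne ν with hMdef
  have hνM : ∀ i ∈ J, ν i ≤ M := fun i hi => Finset.le_sup' ν hi
  have hMpos : 0 < M := by
    have hν2 : 0 < ν i2 := by
      rcases (mul_pos_iff.mp hi2pos) with ⟨_, h⟩ | ⟨h, _⟩
      · exact h
      · exact absurd (hc i2) (not_le.mpr h)
    exact lt_of_lt_of_le hν2 (hνM i2 hi2J)
  obtain ⟨i0, hi0J, hi0M⟩ : ∃ i ∈ J, M = ν i := Finset.exists_mem_eq_sup' hJne ν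
  set T : Finset ι := J.filter (fun i => ν i = M) with hTdef
  set JT : Finset ι := J.filter (fun i => ¬ ν i = M) with hJTdef
  set c₀ : ℝ := ∑ i ∈ T, c i with hc₀def
  have hc₀pos : 0 < c₀ := by
    refine Finset.sum_pos' (fun i hi => (hc i)) ⟨i0, ?_, ?_⟩
    · rw [hTdef]; exact Finset.mem_filter.mpr ⟨hi0J, hi0M.symm⟩
    · exact hcJ i0 hi0J
  set ρ : ℝ := JT.fold max 0 ν with hρdef
  have hρ0 : 0 ≤ ρ := by
    rw [hρdef]
    exact (Finset.le_fold_max _).mpr (Or.inl le_rfl)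
  have hρM : ρ < M := by
    rw [hρdef]
    refine (Finset.fold_max_lt _).mpr ⟨hMpos, fun i hi => ?_⟩
    rw [hJTdef, Finset.mem_filter] at hi
    exact lt_of_le_of_ne (hνM i hi.1) hi.2
  have hνρ : ∀ i ∈ JT, ν i ≤ ρ := fun i hi => (Finset.le_fold_max _).mpr (Or.inr ⟨i, hi, le_rfl⟩)
  -- splitting of the even terms
  have hsplit : ∀ k, (d (2 * k) : ℝ) = c₀ * M ^ k + ∑ i ∈ JT, c i * ν i ^ k := by
    intro k
    rw [heven k]
    rw [← Finset.sum_filter_add_sum_filter_not J (fun i => ν i = M)]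
    congr 1
    rw [hc₀def, Finset.sum_mul]
    refine Finset.sum_congr rfl fun i hi => ?_
    rw [hTdef, Finset.mem_filter] at hi
    rw [hi.2]
  have hE0 : ∀ k, 0 ≤ ∑ i ∈ JT, c i * ν i ^ k := by
    intro k
    exact Finset.sum_nonneg fun i _ => mul_nonneg (hc i) (pow_nonneg (hν0 i) k)
  have hcJT1 : ∑ i ∈ JT, c i ≤ 1 := by
    rw [← hsum1]
    exact Finset.sum_le_sum_of_subset_of_nonneg (Finset.subset_univ JT)
      (fun i _ _ => hc i)
  have hEk : ∀ k, ∑ i ∈ JT, c i * ν i ^ k ≤ ρ ^ k := by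
    intro k
    calc ∑ i ∈ JT, c i * ν i ^ k ≤ ∑ i ∈ JT, c i * ρ ^ k := by
          refine Finset.sum_le_sum fun i hi => ?_
          exact mul_le_mul_of_nonneg_left (pow_le_pow_left₀ (hν0 i) (hνρ i hi) k) (hc i)
      _ = (∑ i ∈ JT, c i) * ρ ^ k := by rw [Finset.sum_mul]
      _ ≤ 1 * ρ ^ k := by
          exact mul_le_mul_of_nonneg_right hcJT1 (pow_nonneg hρ0 k)
      _ = ρ ^ k := one_mul _
  have hdlow : ∀ k, c₀ * M ^ k ≤ (d (2 * k) : ℝ) := by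
    intro k
    rw [hsplit k]
    linarith [hE0 k]
  have hdpos : ∀ k, (0 : ℝ) < (d (2 * k) : ℝ) := by
    intro k
    exact lt_of_lt_of_le (by positivity) (hdlow k)
  -- the ratio bound
  have hratio : ∀ k, M - (M / c₀) * (ρ / M) ^ k ≤ (d (2 * k + 2) : ℝ) / (d (2 * k) : ℝ) := by
    intro k
    have h2k2 : (d (2 * k + 2) : ℝ) = (d (2 * (k + 1)) : ℝ) := by ring_nf
    have hMk : (0 : ℝ) < M ^ k := pow_pos hMpos k
    have hden : (0 : ℝ) < c₀ * M ^ k + ρ ^ k := by positivity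
    have h1 : M - (M / c₀) * (ρ / M) ^ k ≤ c₀ * M ^ (k + 1) / (c₀ * M ^ k + ρ ^ k) := by
      rw [div_pow, le_div_iff₀ hden]
      have hρk : (0 : ℝ) ≤ ρ ^ k := pow_nonneg hρ0 k
      have key : (M - M / c₀ * (ρ ^ k / M ^ k)) * (c₀ * M ^ k + ρ ^ k) * (c₀ * M ^ k)
          ≤ c₀ * M ^ (k + 1) * (c₀ * M ^ k) := by
        have expand : (M - M / c₀ * (ρ ^ k / M ^ k)) * (c₀ * M ^ k + ρ ^ k) * (c₀ * M ^ k)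
            = c₀ * M ^ (k + 1) * (c₀ * M ^ k) - M * (ρ ^ k * ρ ^ k) * (c₀ / c₀) * (M ^ k / M ^ k) := by
          field_simp
          ring
        rw [expand, div_self (ne_of_gt hc₀pos), div_self (ne_of_gt hMk)]
        nlinarith [mul_nonneg (mul_nonneg hMpos.le hρk) hρk]
      have := le_of_mul_le_mul_right key (mul_pos hc₀pos hMk)
      linarith
    have h2 : c₀ * M ^ (k + 1) / (c₀ * M ^ k + ρ ^ k) ≤ (d (2 * k + 2) : ℝ) / (d (2 * k) : ℝ) := by
      rw [h2k2]
      refine div_le_div₀ (Nat.cast_nonneg _) ?_ (hdpos k) ?_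
      · exact le_trans (le_refl _) (hdlow (k + 1))
      · rw [hsplit k]
        linarith [hEk k]
    linarith
  -- bound d n ≤ (√M)^n
  have hM1 : 1 ≤ M := by
    have h2 : (d 2 : ℝ) ≤ M := by
      have : (d 2 : ℝ) = ∑ i ∈ J, c i * ν i ^ 1 := by
        have := heven 1
        norm_num at this ⊢
        exact this
      rw [this]
      calc ∑ i ∈ J, c i * ν i ^ 1 ≤ ∑ i ∈ J, c i * M := by
            refine Finset.sum_le_sum fun i hi => ?_
            rw [pow_one]
            exact mul_le_mul_of_nonneg_left (hνM i hi) (hc i)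
        _ = (∑ i ∈ J, c i) * M := by rw [Finset.sum_mul]
        _ ≤ 1 * M := by
            refine mul_le_mul_of_nonneg_right ?_ hMpos.le
            rw [← hsum1]
            exact Finset.sum_le_sum_of_subset_of_nonneg (Finset.subset_univ J)
              (fun i _ _ => hc i)
        _ = M := one_mul _
    have h1 : (1 : ℝ) ≤ (d 2 : ℝ) := by exact_mod_cast hd2
    linarith
  have hsqrt1 : 1 ≤ Real.sqrt M := by
    rw [show (1:ℝ) = Real.sqrt 1 by rw [Real.sqrt_one]]
    exact Real.sqrt_le_sqrt hM1
  have hbound : ∀ n, (d n : ℝ) ≤ Real.sqrt M ^ n := by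
    intro n
    rw [hd n]
    have hterm : ∀ i ∈ Finset.univ (α := ι), c i * μ i ^ n ≤ c i * Real.sqrt M ^ n := by
      intro i _
      by_cases hci : c i = 0
      · rw [hci, zero_mul, zero_mul]
      · have hiJ : i ∈ J := by rw [hJdef]; simp [hci]
        have habs : |μ i| ≤ Real.sqrt M := by
          rw [← Real.sqrt_sq_eq_abs]
          exact Real.sqrt_le_sqrt (hνM i hiJ)
        have : μ i ^ n ≤ Real.sqrt M ^ n := by
          calc μ i ^ n ≤ |μ i ^ n| := le_abs_self _
            _ = |μ i| ^ n := abs_pow _ _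
            _ ≤ Real.sqrt M ^ n := pow_le_pow_left₀ (abs_nonneg _) habs n
        exact mul_le_mul_of_nonneg_left this (hc i)
    calc ∑ i, c i * μ i ^ n ≤ ∑ i, c i * Real.sqrt M ^ n := Finset.sum_le_sum hterm
      _ = (∑ i, c i) * Real.sqrt M ^ n := by rw [Finset.sum_mul]
      _ = Real.sqrt M ^ n := by rw [hsum1, one_mul]
  -- limsup bound
  have hu_le : ∀ n : ℕ, (d n : ℝ) ^ ((n : ℝ)⁻¹) ≤ Real.sqrt M := by
    intro n
    rcases Nat.eq_zero_or_pos n with hn | hn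
    · subst hn
      norm_num
      linarith
    · have hne : ((n : ℝ)) ≠ 0 := by positivity
      calc (d n : ℝ) ^ ((n : ℝ)⁻¹) ≤ (Real.sqrt M ^ n) ^ ((n : ℝ)⁻¹) := by
            exact Real.rpow_le_rpow (Nat.cast_nonneg _) (hbound n) (by positivity)
        _ = Real.sqrt M := by
            rw [← Real.rpow_natCast (Real.sqrt M) n, ← Real.rpow_mul (Real.sqrt_nonneg M),
              mul_inv_cancel₀ hne, Real.rpow_one]
  have hu_nonneg : ∀ n : ℕ, (0:ℝ) ≤ (d n : ℝ) ^ ((n : ℝ)⁻¹) :=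
    fun n => Real.rpow_nonneg (Nat.cast_nonneg _) _
  have hDle : D ≤ Real.sqrt M := by
    rw [hD]
    refine Filter.limsup_le_of_le ?_ (Filter.Eventually.of_forall hu_le)
    exact Filter.isCoboundedUnder_le_of_le Filter.atTop hu_nonneg
  have hD0 : 0 ≤ D := by
    rw [hD]
    refine Filter.le_limsup_of_frequently_le ?_ ?_
    · exact Filter.Frequently.of_forall hu_nonneg
    · exact Filter.isBoundedUnder_of ⟨Real.sqrt M, hu_le⟩
  have hD2M : D ^ 2 ≤ M := by
    calc D ^ 2 ≤ Real.sqrt M ^ 2 := pow_le_pow_left₀ hD0 hDle 2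
      _ = M := Real.sq_sqrt (by linarith)
  -- membership criterion
  set K : ℝ := M / c₀ with hKdef
  set θ : ℝ := ρ / M with hθdef
  have hKpos : 0 < K := div_pos hMpos hc₀pos
  have hθ0 : 0 ≤ θ := div_nonneg hρ0 hMpos.le
  have hθ1 : θ < 1 := (div_lt_one hMpos).mpr hρM
  have hmem : ∀ n : ℕ, 2 ≤ n → ∀ k : ℕ, K * θ ^ k < 1 / (n : ℝ) →
      ((sInf {k : ℕ | (d (2 * k + 2) : ℝ) / (d (2 * k) : ℝ) > D ^ 2 - 1 / (n : ℝ)} : ℕ) : ℝ)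
        ≤ (k : ℝ) := by
    intro n hn k hk
    have hk_mem : k ∈ {k : ℕ | (d (2 * k + 2) : ℝ) / (d (2 * k) : ℝ) > D ^ 2 - 1 / (n : ℝ)} := by
      show D ^ 2 - 1 / (n : ℝ) < (d (2 * k + 2) : ℝ) / (d (2 * k) : ℝ)
      have := hratio k
      have h1 : D ^ 2 - 1 / (n : ℝ) ≤ M - 1 / (n : ℝ) := by linarith
      have h2 : M - 1 / (n : ℝ) < M - K * θ ^ k := by linarith
      linarith
    exact_mod_cast Nat.cast_le.mpr (Nat.sInf_le hk_mem)
  by_cases hθzero : θ = 0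
  · refine ⟨1 / Real.log 2, by positivity, fun n hn => ?_⟩
    have hlog2 : 0 < Real.log 2 := Real.log_pos (by norm_num)
    have hlogn : Real.log 2 ≤ Real.log n := by
      refine Real.log_le_log (by norm_num) (by exact_mod_cast hn)
    have h1 : K * θ ^ 1 < 1 / (n : ℝ) := by
      rw [hθzero]
      norm_num
      positivity
    have := hmem n hn 1 h1
    calc ((sInf {k : ℕ | (d (2 * k + 2) : ℝ) / (d (2 * k) : ℝ) > D ^ 2 - 1 / (n : ℝ)} : ℕ) : ℝ)
        ≤ 1 := by exact_mod_cast this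
      _ = (1 / Real.log 2) * Real.log 2 := by field_simp
      _ ≤ (1 / Real.log 2) * Real.log n := by
          exact mul_le_mul_of_nonneg_left hlogn (by positivity)
  · have hθpos : 0 < θ := lt_of_le_of_ne hθ0 (Ne.symm hθzero)
    have hlogθ : Real.log θ < 0 := Real.log_neg hθpos hθ1
    set lam : ℝ := -Real.log θ with hlamdef
    have hlam : 0 < lam := by rw [hlamdef]; linarith
    have hlog2 : 0 < Real.log 2 := Real.log_pos (by norm_num)
    refine ⟨|Real.log K| / (lam * Real.log 2) + 1 / lam + 2 / Real.log 2, by positivity, fun n hn => ?_⟩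
    have hnpos : (0 : ℝ) < (n : ℝ) := by
      have : (0:ℕ) < n := by omega
      exact_mod_cast this
    have hlogn : Real.log 2 ≤ Real.log n :=
      Real.log_le_log (by norm_num) (by exact_mod_cast hn)
    have hlognpos : 0 < Real.log n := lt_of_lt_of_le hlog2 hlogn
    set x : ℝ := (Real.log K + Real.log n) / lam with hxdef
    set k : ℕ := ⌈x⌉₊ + 1 with hkdef
    -- the key smallness estimate
    have hsmall : K * θ ^ k < 1 / (n : ℝ) := by
      have hθx : θ ^ (⌈x⌉₊ : ℕ) ≤ θ ^ x := by
        rw [← Real.rpow_natCast θ ⌈x⌉₊]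
        exact Real.rpow_le_rpow_of_exponent_ge hθpos hθ1.le (Nat.le_ceil x)
      have hθxval : θ ^ x = 1 / (K * n) := by
        rw [Real.rpow_def_of_pos hθpos]
        have hxlog : x * Real.log θ = -(Real.log K + Real.log n) := by
          rw [hxdef, hlamdef]
          field_simp
          rw [mul_div_cancel_right₀ _ hlogθ.ne]
        rw [mul_comm, hxlog, Real.exp_neg, Real.exp_add, Real.exp_log hKpos, Real.exp_log hnpos, one_div]
      have hθk : θ ^ k = θ ^ (⌈x⌉₊ : ℕ) * θ := by
        rw [hkdef, pow_succ]
      calc K * θ ^ k = K * θ ^ (⌈x⌉₊ : ℕ) * θ := by rw [hθk]; ring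
        _ ≤ K * (1 / (K * n)) * θ := by
            refine mul_le_mul_of_nonneg_right (mul_le_mul_of_nonneg_left ?_ hKpos.le) hθ0
            rw [← hθxval]
            exact hθx
        _ = θ / n := by
            rw [mul_one_div, div_mul_cancel_left₀ (ne_of_gt hKpos), inv_mul_eq_div]
        _ < 1 / n := by
            rw [div_lt_div_iff₀ hnpos hnpos]
            nlinarith
    have hRk := hmem n hn k hsmall
    -- bound (k : ℝ)
    have hceil : (⌈x⌉₊ : ℝ) ≤ max x 0 + 1 := by
      rcases le_or_gt x 0 with hx | hx
      · rw [Nat.ceil_eq_zero.mpr hx]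
        have := le_max_right x 0
        simp only [Nat.cast_zero]
        linarith
      · have := Nat.ceil_lt_add_one hx.le
        have hmax : max x 0 = x := max_eq_left hx.le
        rw [hmax]
        linarith
    have hmaxx : max x 0 ≤ (|Real.log K| + Real.log n) / lam := by
      refine max_le ?_ (by positivity)
      rw [hxdef]
      refine div_le_div_of_nonneg_right ?_ hlam.le
      have := le_abs_self (Real.log K)
      linarith
    have hkbound : (k : ℝ) ≤ (|Real.log K| + Real.log n) / lam + 2 := by
      rw [hkdef]
      push_cast
      linarith
    refine le_trans hRk (le_trans hkbound ?_)
    have e1 : (|Real.log K| + Real.log n) / lam = |Real.log K| / lam + Real.log n / lam := by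
      ring
    have e2 : |Real.log K| / lam ≤ (|Real.log K| / (lam * Real.log 2)) * Real.log n := by
      rw [div_mul_eq_mul_div, div_le_div_iff₀ hlam (by positivity)]
      have h1 : |Real.log K| * Real.log 2 ≤ |Real.log K| * Real.log n :=
        mul_le_mul_of_nonneg_left hlogn (abs_nonneg _)
      calc |Real.log K| * (lam * Real.log 2) = (|Real.log K| * Real.log 2) * lam := by ring
        _ ≤ (|Real.log K| * Real.log n) * lam := by
            exact mul_le_mul_of_nonneg_right h1 hlam.le
        _ = |Real.log K| * Real.log n * lam := rfl
    have e3 : Real.log n / lam = (1 / lam) * Real.log n := by ring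
    have e4 : (2 : ℝ) ≤ (2 / Real.log 2) * Real.log n := by
      rw [div_mul_eq_mul_div, le_div_iff₀ hlog2]
      nlinarith
    rw [e1]
    calc |Real.log K| / lam + Real.log n / lam + 2
        ≤ (|Real.log K| / (lam * Real.log 2)) * Real.log n + (1 / lam) * Real.log n
          + (2 / Real.log 2) * Real.log n := by
          rw [e3]
          linarith
      _ = (|Real.log K| / (lam * Real.log 2) + 1 / lam + 2 / Real.log 2) * Real.log n := by ring

open Matrix Finset

variable {G : Type*} [Group G] [Fintype G] [DecidableEq G] (S : Set G) [Fintype S]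
set_option linter.unusedSectionVars false

/-- word count -/
noncomputable def Wc (n : ℕ) (g : G) : ℕ :=
  Nat.card {w : Fin n → S // (List.ofFn fun i => ((w i : G))).prod = g}

lemma prod_ofFn_succ' {n : ℕ} (f : Fin (n + 1) → G) :
    (List.ofFn f).prod = (List.ofFn fun i : Fin n => f i.castSucc).prod * f (Fin.last n) := by
  rw [List.ofFn_succ']
  simp

lemma Wc_succ (n : ℕ) (g : G) :
    Wc S (n + 1) g = ∑ s : S, Wc S n (g * (s : G)⁻¹) := by
  classical
  have e : {w : Fin (n+1) → S // (List.ofFn fun i => ((w i : G))).prod = g} ≃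
      Σ s : S, {v : Fin n → S // (List.ofFn fun i => ((v i : G))).prod = g * (s : G)⁻¹} := by
    refine
      { toFun := fun w => ⟨w.1 (Fin.last n), ⟨Fin.init w.1, ?_⟩⟩
        invFun := fun p => ⟨Fin.snoc p.2.1 p.1, ?_⟩
        left_inv := ?_
        right_inv := ?_ }
    · have h := w.2
      rw [prod_ofFn_succ' (fun i => ((w.1 i : G)))] at h
      have : (List.ofFn fun i : Fin n => ((Fin.init w.1 i : G))).prod
          = (List.ofFn fun i : Fin n => ((w.1 i.castSucc : G))).prod := rfl
      rw [this]
      exact eq_mul_inv_of_mul_eq h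
    · rw [prod_ofFn_succ' (fun i => (((Fin.snoc p.2.1 p.1 : Fin (n+1) → S) i : G)))]
      have h1 : ∀ i : Fin n, ((Fin.snoc p.2.1 p.1 : Fin (n+1) → S) i.castSucc : G) = (p.2.1 i : G) := by
        intro i; rw [Fin.snoc_castSucc]
      have h2 : ((Fin.snoc p.2.1 p.1 : Fin (n+1) → S) (Fin.last n) : G) = (p.1 : G) := by
        rw [Fin.snoc_last]
      simp only [h1, h2, p.2.2]
      group
    · rintro ⟨w, hw⟩
      ext i
      simp [Fin.snoc_init_self]
    · rintro ⟨s, v, hv⟩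
      refine Sigma.ext ?_ ?_
      · simp
      · rw [Subtype.heq_iff_coe_eq (by simp [Fin.snoc_last])]
        ext i
        simp [Fin.init_snoc]
  rw [Wc, Nat.card_congr e]
  haveI : ∀ s : S, Fintype {v : Fin n → S // (List.ofFn fun i => ((v i : G))).prod = g * (s : G)⁻¹} :=
    fun s => Fintype.ofFinite _
  rw [Nat.card_eq_fintype_card, Fintype.card_sigma]
  refine Finset.sum_congr rfl fun s _ => ?_
  rw [Wc, Nat.card_eq_fintype_card]

variable [DecidablePred (· ∈ S)]

noncomputable def Am : Matrix G G ℝ :=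
  Matrix.of fun g h => if g⁻¹ * h ∈ S then (1 : ℝ) else 0

lemma Wc_zero (g : G) : (Wc S 0 g : ℝ) = if (1 : G) = g then 1 else 0 := by
  by_cases h : (1 : G) = g
  · subst h
    simp only [if_pos rfl]
    haveI : Unique {w : Fin 0 → S // (List.ofFn fun i => ((w i : G))).prod = (1:G)} :=
      ⟨⟨⟨fun i => i.elim0, by simp⟩⟩, by rintro ⟨w, hw⟩; ext i; exact i.elim0⟩
    rw [Wc, Nat.card_unique]
    norm_num
  · rw [if_neg h]
    haveI : IsEmpty {w : Fin 0 → S // (List.ofFn fun i => ((w i : G))).prod = g} := by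
      refine ⟨?_⟩
      rintro ⟨w, hw⟩
      simp at hw
      exact h hw
    rw [Wc, Nat.card_of_isEmpty]
    norm_num

lemma Am_pow (n : ℕ) (g : G) : ((Am S) ^ n) 1 g = (Wc S n g : ℝ) := by
  induction n generalizing g with
  | zero =>
    rw [pow_zero, Matrix.one_apply, Wc_zero]
  | succ n ih =>
    rw [pow_succ, Matrix.mul_apply]
    rw [Wc_succ, Nat.cast_sum]
    have step1 : ∀ h : G, ((Am S) ^ n) 1 h * Am S h g
        = if h⁻¹ * g ∈ S then ((Am S) ^ n) 1 h else 0 := by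
      intro h
      rw [Am, Matrix.of_apply]
      split <;> simp
    simp only [step1]
    rw [← Equiv.sum_comp ((Equiv.inv G).trans (Equiv.mulLeft g))
      (fun h => if h⁻¹ * g ∈ S then ((Am S) ^ n) 1 h else 0)]
    have step2 : ∀ s : G, (if (g * s⁻¹)⁻¹ * g ∈ S then ((Am S) ^ n) 1 (g * s⁻¹) else 0)
        = if s ∈ S then ((Am S) ^ n) 1 (g * s⁻¹) else 0 := by
      intro s
      have : (g * s⁻¹)⁻¹ * g = s := by group
      rw [this]
    simp only [Equiv.trans_apply, Equiv.inv_apply, Equiv.coe_mulLeft, step2]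
    rw [← Finset.sum_filter]
    have hfilter : Finset.univ.filter (· ∈ S) = S.toFinset := by
      ext x; simp
    rw [hfilter, Finset.sum_subtype S.toFinset (fun x => Set.mem_toFinset)
      (fun s => ((Am S) ^ n) 1 (g * s⁻¹))]
    exact Finset.sum_congr rfl fun s _ => ih _

lemma Am_isHermitian (hsym : ∀ s ∈ S, s⁻¹ ∈ S) : (Am S).IsHermitian := by
  refine Matrix.IsHermitian.ext fun g h => ?_
  simp only [Am, Matrix.of_apply, star_trivial]
  have key : h⁻¹ * g ∈ S ↔ g⁻¹ * h ∈ S := by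
    constructor
    · intro hm
      have := hsym _ hm
      rwa [_root_.mul_inv_rev, inv_inv] at this
    · intro hm
      have := hsym _ hm
      rwa [_root_.mul_inv_rev, inv_inv] at this
  split <;> split <;> first | rfl | (exfalso; tauto)

lemma exists_decomp (hsym : ∀ s ∈ S, s⁻¹ ∈ S) :
    ∃ c μ : G → ℝ, (∀ i, 0 ≤ c i) ∧
      ∀ n, (Wc S n 1 : ℝ) = ∑ i, c i * μ i ^ n := by
  have hA := Am_isHermitian S hsym
  set U : Matrix G G ℝ := (hA.eigenvectorUnitary : Matrix G G ℝ) with hUdef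
  set e : G → ℝ := RCLike.ofReal ∘ hA.eigenvalues with hedef
  have hspec : Am S = U * Matrix.diagonal e * star U := hA.spectral_theorem
  have hU1 : U * star U = 1 := (Matrix.mem_unitaryGroup_iff).mp hA.eigenvectorUnitary.2
  have hU2 : star U * U = 1 := (Matrix.mem_unitaryGroup_iff').mp hA.eigenvectorUnitary.2
  have hpow : ∀ n, (Am S) ^ n = U * (Matrix.diagonal e) ^ n * star U := by
    intro n
    induction n with
    | zero => simp [hU1]
    | succ n ih =>
      rw [pow_succ, ih, hspec, pow_succ]
      simp only [Matrix.mul_assoc]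
      rw [← Matrix.mul_assoc (star U) U, hU2, Matrix.one_mul]
  refine ⟨fun i => U 1 i * U 1 i, e, fun i => mul_self_nonneg _, fun n => ?_⟩
  rw [← Am_pow, hpow, Matrix.diagonal_pow, Matrix.mul_apply]
  refine Finset.sum_congr rfl fun i _ => ?_
  rw [Matrix.mul_diagonal, Matrix.star_apply, star_trivial, Pi.pow_apply]
  ring


end CogrowthAux

/-- For a finite group `G` with a nonempty finite symmetric generating set `S`,
the function `R′` is at most logarithmic: there is `C > 0` with `R′(n) ≤ C·log n`
for all `n ≥ 2`. -/

theorem Rprime_finite_group_log (G : Type*) [Group G] [Finite G] (S : Set G)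
    (hne : S.Nonempty) (hsym : ∀ s ∈ S, s⁻¹ ∈ S) (hgen : Subgroup.closure S = ⊤) :
    ∃ C : ℝ, 0 < C ∧ ∀ n : ℕ, 2 ≤ n → (Rprime G S n : ℝ) ≤ C * Real.log n := by
  classical
  haveI : Fintype G := Fintype.ofFinite G
  haveI : Fintype S := Fintype.ofFinite S
  obtain ⟨c, μ, hc, hdW⟩ := exists_decomp S hsym
  have hcog : ∀ n, cogrowth G S n = Wc S n 1 := fun n => rfl
  have hd : ∀ n, (cogrowth G S n : ℝ) = ∑ i, c i * μ i ^ n := by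
    intro n
    rw [hcog n, hdW n]
  have hd0 : cogrowth G S 0 = 1 := by
    have := Wc_zero S (1 : G)
    rw [if_pos rfl] at this
    rw [hcog 0]
    exact_mod_cast this
  have hd2 : 0 < cogrowth G S 2 := by
    obtain ⟨s, hs⟩ := hne
    set w : Fin 2 → S := ![⟨s, hs⟩, ⟨s⁻¹, hsym s hs⟩] with hwdef
    have hw : (List.ofFn fun i => ((w i : G))).prod = 1 := by
      simp [hwdef, List.ofFn_succ]
    haveI : Nonempty {w : Fin 2 → S // (List.ofFn fun i => ((w i : G))).prod = 1} := ⟨⟨w, hw⟩⟩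
    exact Nat.card_pos
  obtain ⟨C, hC, hCle⟩ := analysis_aux (cogrowth G S) c μ hc hd hd0 hd2
    (cogrowthRate G S) rfl
  exact ⟨C, hC, fun n hn => hCle n hn⟩
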